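/- arXiv:1008.1498 — 5 statements merged into one kernel-verified Lean document; each statement's English description precedes it below -/
import Mathlib

section
/- Let A be an m×n matrix over ℚ with m ≥ n such that every square submatrix of A is nonsingular (i.e., for every k ≥ 1 and every choice of row indices R and column indices C with |R| = |C| = k, the k×k submatrix A(R,C) is invertible). Then A has rank n, and A is completely unsparsifiable: for every invertible n×n matrix X over ℚ, nnz(AX) ≥ (m−n+1)·n. -/
/-- Number of nonzero entries of a matrix. -/
def nnz {m n : ℕ} (A : Matrix (Fin m) (Fin n) ℚ) : ℕ :=
  Finset.card (Finset.univ.filter fun p : Fin m × Fin n => A p.1 p.2 ≠ 0)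

/-- Key lemma: if all square submatrices are nonsingular and `v ≠ 0`, then
`A.mulVec v` has at most `n - 1` zero entries. -/
lemma few_zeros (m n : ℕ) (hn : 1 ≤ n)
    (A : Matrix (Fin m) (Fin n) ℚ)
    (hsub : ∀ k : ℕ, 1 ≤ k → ∀ (r : Fin k → Fin m) (c : Fin k → Fin n),
      Function.Injective r → Function.Injective c →
      IsUnit (A.submatrix r c).det)
    (v : Fin n → ℚ) (hv : v ≠ 0) :
    (Finset.univ.filter fun i : Fin m => A.mulVec v i = 0).card ≤ n - 1 := by
  by_contra h
  push_neg at h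
  have hcard : n ≤ (Finset.univ.filter fun i : Fin m => A.mulVec v i = 0).card := by
    omega
  obtain ⟨Z, hZsub, hZcard⟩ := Finset.exists_subset_card_eq hcard
  set r : Fin n → Fin m := fun i => Z.orderEmbOfFin hZcard i with hr
  have hrinj : Function.Injective r := (Z.orderEmbOfFin hZcard).injective
  have hdet := hsub n hn r id hrinj Function.injective_id
  have hMinj : Function.Injective (A.submatrix r id).mulVec :=
    Matrix.mulVec_injective_iff_isUnit.mpr (Matrix.isUnit_iff_isUnit_det _ |>.mpr hdet)
  have hzero : (A.submatrix r id).mulVec v = 0 := by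
    funext i
    have hmem : r i ∈ Z := Z.orderEmbOfFin_mem hZcard i
    have := hZsub hmem
    simp only [Finset.mem_filter] at this
    have h0 : A.mulVec v (r i) = 0 := this.2
    simpa [Matrix.mulVec, Matrix.submatrix, dotProduct] using h0
  have : v = 0 := by
    apply hMinj
    simpa using hzero
  exact hv this

/-- If every square submatrix of the m×n rational matrix `A` (with m ≥ n) is
nonsingular, then `A` has rank `n` and is completely unsparsifiable:
`nnz (A * X) ≥ (m - n + 1) * n` for every invertible `X`. -/
theorem matrix_unsparsifiable (m n : ℕ) (hmn : n ≤ m)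
    (A : Matrix (Fin m) (Fin n) ℚ)
    (hsub : ∀ k : ℕ, 1 ≤ k → ∀ (r : Fin k → Fin m) (c : Fin k → Fin n),
      Function.Injective r → Function.Injective c →
      IsUnit (A.submatrix r c).det) :
    A.rank = n ∧
      ∀ X : Matrix (Fin n) (Fin n) ℚ, IsUnit X.det →
        (m - n + 1) * n ≤ nnz (A * X) := by
  rcases Nat.eq_zero_or_pos n with hn0 | hn
  · subst hn0
    constructor
    · have := A.rank_le_width
      omega
    · intro X hX
      simp
  · -- n ≥ 1
    have hker : ∀ v : Fin n → ℚ, A.mulVec v = 0 → v = 0 := by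
      intro v hv0
      by_contra hv
      have hz := few_zeros m n hn A hsub v hv
      have : (Finset.univ.filter fun i : Fin m => A.mulVec v i = 0).card = m := by
        rw [Finset.filter_true_of_mem, Finset.card_univ, Fintype.card_fin]
        intro i _
        rw [hv0]; rfl
      omega
    have hinj : Function.Injective A.mulVecLin := by
      rw [← LinearMap.ker_eq_bot, LinearMap.ker_eq_bot']
      intro v hv
      exact hker v hv
    constructor
    · have h1 : A.rank ≤ n := A.rank_le_width
      have h2 : n ≤ A.rank := by
        have := LinearMap.finrank_range_of_inj hinj
        rw [Matrix.rank, this]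
        simp
      omega
    · intro X hX
      -- column counting
      have hcol : ∀ j : Fin n,
          m - n + 1 ≤ (Finset.univ.filter fun i : Fin m => (A * X) i j ≠ 0).card := by
        intro j
        have hvne : (fun k => X k j) ≠ 0 := by
          intro hv0
          have : X.det = 0 := by
            apply Matrix.det_eq_zero_of_column_eq_zero j
            intro i
            exact congrFun hv0 i
          rw [this] at hX
          exact hX.ne_zero rfl
        have hz := few_zeros m n hn A hsub (fun k => X k j) hvne
        have heq : ∀ i : Fin m, A.mulVec (fun k => X k j) i = (A * X) i j := by
          intro i
          simp [Matrix.mulVec, Matrix.mul_apply, dotProduct]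
        have hsplit := Finset.card_filter_add_card_filter_not
          (s := (Finset.univ : Finset (Fin m)))
          (p := fun i => (A * X) i j = 0)
        have hz' : (Finset.univ.filter fun i : Fin m => (A * X) i j = 0).card ≤ n - 1 := by
          simpa only [heq] using hz
        simp only [Finset.card_univ, Fintype.card_fin] at hsplit
        have : (Finset.univ.filter fun i : Fin m => ¬ (A * X) i j = 0).card
            = (Finset.univ.filter fun i : Fin m => (A * X) i j ≠ 0).card := rfl
        omega
      have hsum : nnz (A * X) = ∑ j : Fin n,
          (Finset.univ.filter fun i : Fin m => (A * X) i j ≠ 0).card := by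
        rw [nnz]
        rw [Finset.card_filter]
        simp_rw [Finset.card_filter]
        rw [Fintype.sum_prod_type]
        exact Finset.sum_comm
      rw [hsum]
      calc (m - n + 1) * n = ∑ _j : Fin n, (m - n + 1) := by
            simp [mul_comm]
        _ ≤ _ := Finset.sum_le_sum fun j _ => hcol j
end

section
/- An m×n matrix A over ℚ with columns a₁,…,aₙ is optimally sparse if and only if for every nonzero vector x ∈ ℚⁿ one has ||Ax||₀ ≥ max over i ∈ supp(x) of ||aᵢ||₀. -/
/-- Number of nonzero entries of a vector (the ℓ₀ quasi-norm). -/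
def l0 {n : ℕ} (x : Fin n → ℚ) : ℕ :=
  Finset.card (Finset.univ.filter fun i => x i ≠ 0)

/-- A matrix `A` is optimally sparse iff `nnz (A * X) ≥ nnz A` for every
invertible `X`. -/
def OptimallySparse {m n : ℕ} (A : Matrix (Fin m) (Fin n) ℚ) : Prop :=
  ∀ X : Matrix (Fin n) (Fin n) ℚ, IsUnit X.det → nnz A ≤ nnz (A * X)

lemma nnz_eq_sum {m n : ℕ} (A : Matrix (Fin m) (Fin n) ℚ) :
    nnz A = ∑ j, l0 (fun k => A k j) := by
  classical
  simp only [nnz, l0, Finset.card_filter]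
  rw [Fintype.sum_prod_type]
  exact Finset.sum_comm

lemma col_mul {m n : ℕ} (A : Matrix (Fin m) (Fin n) ℚ)
    (X : Matrix (Fin n) (Fin n) ℚ) (j : Fin n) :
    (fun k => (A * X) k j) = A.mulVec (fun l => X l j) := by
  funext k
  simp [Matrix.mul_apply, Matrix.mulVec, dotProduct]

lemma exists_perm_of_det_ne_zero {n : ℕ} (X : Matrix (Fin n) (Fin n) ℚ)
    (h : X.det ≠ 0) : ∃ σ : Equiv.Perm (Fin n), ∀ j, X (σ j) j ≠ 0 := by
  by_contra hc
  push_neg at hc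
  apply h
  rw [Matrix.det_apply]
  apply Finset.sum_eq_zero
  intro σ _
  obtain ⟨j, hj⟩ := hc σ
  have hp : ∏ i, X (σ i) i = 0 := Finset.prod_eq_zero (Finset.mem_univ j) hj
  rw [hp]
  simp

/-- An m×n rational matrix `A` is optimally sparse if and only if for every
nonzero vector `x`, `‖Ax‖₀ ≥ max_{i ∈ supp x} ‖aᵢ‖₀` (where `aᵢ` are the
columns of `A`). -/
theorem optimally_sparse_iff (m n : ℕ) (A : Matrix (Fin m) (Fin n) ℚ) :
    OptimallySparse A ↔
      ∀ x : Fin n → ℚ, x ≠ 0 →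
        ∀ i : Fin n, x i ≠ 0 → l0 (fun k => A k i) ≤ l0 (A.mulVec x) := by
  constructor
  · intro hA x hx i hxi
    set X : Matrix (Fin n) (Fin n) ℚ := (1 : Matrix (Fin n) (Fin n) ℚ).updateCol i x with hXdef
    have hdet : X.det = x i := by
      rw [← Matrix.cramer_apply, Matrix.cramer_one]
      rfl
    have hiu : IsUnit X.det := by
      rw [hdet]; exact isUnit_iff_ne_zero.mpr hxi
    have key := hA X hiu
    rw [nnz_eq_sum, nnz_eq_sum] at key
    have hcol : ∀ j : Fin n, l0 (fun k => (A * X) k j) =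
        if j = i then l0 (A.mulVec x) else l0 (fun k => A k j) := by
      intro j
      rw [col_mul]
      by_cases hj : j = i
      · subst hj
        simp only [if_pos rfl]
        congr 1
        funext l
        simp [hXdef, Matrix.updateCol_apply]
      · simp only [if_neg hj]
        have : (fun l => X l j) = fun l => (1 : Matrix (Fin n) (Fin n) ℚ) l j := by
          funext l
          simp [hXdef, Matrix.updateCol_apply, hj]
        rw [this]
        congr 1
        funext k
        simp [Matrix.mulVec, dotProduct, Matrix.one_apply]
    simp only [hcol] at key
    have hs1 : ∑ j, l0 (fun k => A k j) =
        l0 (fun k => A k i) + ∑ j ∈ Finset.univ.erase i, l0 (fun k => A k j) :=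
      (Finset.add_sum_erase Finset.univ _ (Finset.mem_univ i)).symm
    have hs2 : (∑ j, if j = i then l0 (A.mulVec x) else l0 (fun k => A k j)) =
        l0 (A.mulVec x) + ∑ j ∈ Finset.univ.erase i, l0 (fun k => A k j) := by
      rw [← Finset.add_sum_erase Finset.univ _ (Finset.mem_univ i), if_pos rfl]
      congr 1
      apply Finset.sum_congr rfl
      intro j hj
      rw [if_neg (Finset.ne_of_mem_erase hj)]
    rw [hs1, hs2] at key
    exact le_of_add_le_add_right key
  · intro h X hX
    have hdet : X.det ≠ 0 := hX.ne_zero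
    obtain ⟨σ, hσ⟩ := exists_perm_of_det_ne_zero X hdet
    rw [nnz_eq_sum, nnz_eq_sum]
    calc ∑ j, l0 (fun k => A k j)
        = ∑ j, l0 (fun k => A k (σ j)) := (Equiv.sum_comp σ _).symm
      _ ≤ ∑ j, l0 (fun k => (A * X) k j) := by
          apply Finset.sum_le_sum
          intro j _
          have hxne : (fun l => X l j) ≠ 0 := by
            intro h0
            exact hσ j (congrFun h0 (σ j))
          have := h (fun l => X l j) hxne (σ j) (hσ j)
          rw [col_mul]
          exact this
end

section
/- Let A be an m×n matrix over ℚ. For any nonzero vector x ∈ ℚⁿ and any index i ∈ supp(x), there exist a row set R ⊆ {1,…,m} and a column set C ⊆ {1,…,n} such that A(R,C) is a candidate submatrix of A, |R| ≥ m − ||Ax||₀, and i ∈ C ⊆ supp(x). -/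
/-- The submatrix `A(R,C)` is row-inclusive: for every row index `r ∉ R`,
the row `A({r},C)` does not lie in the row span of `A(R,C)`. -/
def RowInclusive {m n : ℕ} (A : Matrix (Fin m) (Fin n) ℚ)
    (R : Finset (Fin m)) (C : Finset (Fin n)) : Prop :=
  ∀ r : Fin m, r ∉ R →
    (fun j : {x // x ∈ C} => A r j) ∉
      Submodule.span ℚ
        (Set.range fun i : {x // x ∈ R} => fun j : {x // x ∈ C} => A i j)

/-- `A(R,C)` is a candidate submatrix of `A`: it is row-inclusive and
`rank A(R,C) = |C| - 1`. -/
def CandidateSubmatrix {m n : ℕ} (A : Matrix (Fin m) (Fin n) ℚ)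
    (R : Finset (Fin m)) (C : Finset (Fin n)) : Prop :=
  RowInclusive A R C ∧
    (A.submatrix (fun i : {x // x ∈ R} => (i : Fin m))
        (fun j : {x // x ∈ C} => (j : Fin n))).rank + 1 = C.card

lemma range_subtype_image {α β : Type*} (s : Finset α) (f : α → β) :
    (Set.range fun j : {y // y ∈ s} => f ↑j) = f '' ↑s := by
  ext b
  simp [Set.mem_image]

lemma finset_erase_comm {α : Type*} [DecidableEq α] (s : Finset α) (a b : α) :
    (s.erase a).erase b = (s.erase b).erase a := by
  ext c; simp; tauto

/-- For any nonzero `x` and `i ∈ supp x`, there is a candidate submatrix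
`A(R,C)` of `A` with `|R| ≥ m - ‖Ax‖₀` and `i ∈ C ⊆ supp x`. -/
theorem candidate_submatrix_exists (m n : ℕ) (A : Matrix (Fin m) (Fin n) ℚ)
    (x : Fin n → ℚ) (hx : x ≠ 0) (i : Fin n) (hi : x i ≠ 0) :
    ∃ (R : Finset (Fin m)) (C : Finset (Fin n)),
      CandidateSubmatrix A R C ∧
      m - l0 (A.mulVec x) ≤ R.card ∧
      i ∈ C ∧ ∀ j ∈ C, x j ≠ 0 := by
  classical
  set R₀ : Finset (Fin m) := Finset.univ.filter (fun r => A.mulVec x r = 0) with hR₀def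
  set S : Finset (Fin n) := Finset.univ.filter (fun j => x j ≠ 0) with hSdef
  have hiS : i ∈ S := by simp [hSdef, hi]
  -- columns restricted to rows R₀
  set col : Fin n → ({r // r ∈ R₀} → ℚ) := fun j r => A r j with hcol
  -- the support columns are linearly dependent with coefficients x
  have hsum0 : ∑ j ∈ S, x j • col j = 0 := by
    funext r
    have hr : A.mulVec x r.1 = 0 := by
      exact (Finset.mem_filter.1 r.2).2
    have : ∑ j ∈ S, x j * A r.1 j = ∑ j : Fin n, x j * A r.1 j := by
      refine Finset.sum_subset (Finset.subset_univ S) ?_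
      intro j _ hj
      have : x j = 0 := by
        by_contra h; exact hj (by simp [hSdef, h])
      simp [this]
    simp only [Finset.sum_apply, Pi.smul_apply, smul_eq_mul, Pi.zero_apply, hcol]
    rw [this]
    rw [Matrix.mulVec, dotProduct] at hr
    rw [← hr]
    exact Finset.sum_congr rfl fun j _ => mul_comm _ _
  -- generic: a dependence with nonzero coeff at a puts col a in the span of the rest
  have key : ∀ (T : Finset (Fin n)) (c : Fin n → ℚ) (a : Fin n), a ∈ T → c a ≠ 0 →
      (∑ j ∈ T, c j • col j = 0) → col a ∈ Submodule.span ℚ (col '' ↑(T.erase a)) := by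
    intro T c a haT hca hsum
    have h1 := Finset.add_sum_erase T (fun j => c j • col j) haT
    rw [hsum] at h1
    have h3 : c a • col a = -∑ j ∈ T.erase a, c j • col j := eq_neg_of_add_eq_zero_left h1
    have h2 : col a = (c a)⁻¹ • (c a • col a) := (inv_smul_smul₀ hca (col a)).symm
    rw [h2, h3]
    refine Submodule.smul_mem _ _ (Submodule.neg_mem _ ?_)
    refine Submodule.sum_mem _ fun j hj => Submodule.smul_mem _ _ ?_
    exact Submodule.subset_span (Set.mem_image_of_mem col (Finset.mem_coe.2 hj))
  have hbase : col i ∈ Submodule.span ℚ (col '' ↑(S.erase i)) :=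
    key S x i hiS hi hsum0
  -- minimal C
  set T : Finset (Finset (Fin n)) :=
    S.powerset.filter (fun C => i ∈ C ∧ col i ∈ Submodule.span ℚ (col '' ↑(C.erase i))) with hTdef
  have hST : S ∈ T := by
    rw [hTdef]
    exact Finset.mem_filter.2 ⟨Finset.mem_powerset.2 (Finset.Subset.refl S), hiS, hbase⟩
  obtain ⟨C, hCT, hCmin⟩ := T.exists_min_image Finset.card ⟨S, hST⟩
  have hCS : C ⊆ S := by
    have := hCT; rw [hTdef, Finset.mem_filter, Finset.mem_powerset] at this; exact this.1
  have hiC : i ∈ C := by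
    have := hCT; rw [hTdef, Finset.mem_filter] at this; exact this.2.1
  have hCspan : col i ∈ Submodule.span ℚ (col '' ↑(C.erase i)) := by
    have := hCT; rw [hTdef, Finset.mem_filter] at this; exact this.2.2
  -- columns over C.erase i are linearly independent
  have hli : LinearIndependent ℚ (fun j : {y // y ∈ C.erase i} => col ↑j) := by
    by_contra hdep
    rw [Fintype.not_linearIndependent_iff] at hdep
    obtain ⟨g, hg0, j₀, hj₀⟩ := hdep
    -- lift to a Finset sum over C.erase i
    set c : Fin n → ℚ := fun j => if h : j ∈ C.erase i then g ⟨j, h⟩ else 0 with hcdef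
    have hcg : ∀ j : {y // y ∈ C.erase i}, c ↑j = g j := fun j =>
      (dif_pos j.2).trans (congrArg g (Subtype.coe_eta j j.2))
    have hsum' : ∑ j ∈ C.erase i, c j • col j = 0 := by
      rw [← hg0, ← Finset.sum_coe_sort (C.erase i) (fun j => c j • col j)]
      exact Finset.sum_congr rfl fun j _ => by rw [hcg j]
    have hcj₀ : c ↑j₀ ≠ 0 := by rw [hcg j₀]; exact hj₀
    have hmem : col ↑j₀ ∈ Submodule.span ℚ (col '' ↑((C.erase i).erase ↑j₀)) :=
      key (C.erase i) c ↑j₀ j₀.2 hcj₀ hsum'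
    -- then C.erase j₀ also works
    have hspan_eq : Submodule.span ℚ (col '' ↑(C.erase i)) =
        Submodule.span ℚ (col '' ↑((C.erase i).erase ↑j₀)) := by
      conv_lhs => rw [← Finset.insert_erase j₀.2]
      rw [Finset.coe_insert, Set.image_insert_eq]
      exact Submodule.span_insert_eq_span hmem
    have hj₀C : (↑j₀ : Fin n) ∈ C := Finset.mem_of_mem_erase j₀.2
    have hij₀ : i ≠ ↑j₀ := fun h => (Finset.ne_of_mem_erase j₀.2) h.symm
    have hC' : C.erase ↑j₀ ∈ T := by
      rw [hTdef, Finset.mem_filter, Finset.mem_powerset]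
      refine ⟨(Finset.erase_subset _ _).trans hCS, Finset.mem_erase.2 ⟨hij₀, hiC⟩, ?_⟩
      rw [finset_erase_comm]
      rw [hspan_eq] at hCspan
      exact hCspan
    have := hCmin _ hC'
    have hlt : (C.erase ↑j₀).card < C.card := Finset.card_erase_lt_of_mem hj₀C
    omega
  -- rank of A(R₀, C) is |C| - 1
  set M₀ : Matrix {r // r ∈ R₀} {j // j ∈ C} ℚ :=
    A.submatrix (fun r : {r // r ∈ R₀} => (r : Fin m)) (fun j : {j // j ∈ C} => (j : Fin n))
    with hM₀
  have hcolsM₀ : (Set.range M₀.transpose) = col '' ↑C := by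
    have h : M₀.transpose = fun j : {j // j ∈ C} => col ↑j := rfl
    rw [h, range_subtype_image]
  have hrankM₀ : M₀.rank = C.card - 1 := by
    rw [Matrix.rank_eq_finrank_span_cols, Matrix.col, hcolsM₀]
    have hCeq : Submodule.span ℚ (col '' ↑C) = Submodule.span ℚ (col '' ↑(C.erase i)) := by
      conv_lhs => rw [← Finset.insert_erase hiC]
      rw [Finset.coe_insert, Set.image_insert_eq]
      exact Submodule.span_insert_eq_span hCspan
    rw [hCeq, ← range_subtype_image (C.erase i) col, finrank_span_eq_card hli,
      Fintype.card_coe, Finset.card_erase_of_mem hiC]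
  -- row span of A(R₀, C)
  set rowC : Fin m → ({j // j ∈ C} → ℚ) := fun r => fun j => A r ↑j with hrowC
  set W : Submodule ℚ ({j // j ∈ C} → ℚ) := Submodule.span ℚ (rowC '' ↑R₀) with hW
  have hrowsM₀ : (Set.range M₀.row) = rowC '' ↑R₀ := by
    have : M₀.row = fun r : {r // r ∈ R₀} => rowC ↑r := rfl
    rw [this, range_subtype_image]
  have hfinW : Module.finrank ℚ W = C.card - 1 := by
    rw [hW, ← hrowsM₀, ← Matrix.rank_eq_finrank_span_row, hrankM₀]
  -- the closed row set R
  set R : Finset (Fin m) := Finset.univ.filter (fun r => rowC r ∈ W) with hRdef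
  have hR₀R : R₀ ⊆ R := by
    intro r hr
    simp only [hRdef, Finset.mem_filter, Finset.mem_univ, true_and]
    exact Submodule.subset_span ⟨r, hr, rfl⟩
  set M : Matrix {r // r ∈ R} {j // j ∈ C} ℚ :=
    A.submatrix (fun r : {r // r ∈ R} => (r : Fin m)) (fun j : {j // j ∈ C} => (j : Fin n))
    with hM
  have hrowsM : (Set.range M.row) = rowC '' ↑R := by
    have : M.row = fun r : {r // r ∈ R} => rowC ↑r := rfl
    rw [this, range_subtype_image]
  have hspanR : Submodule.span ℚ (rowC '' ↑R) = W := by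
    apply le_antisymm
    · rw [Submodule.span_le]
      rintro - ⟨r, hr, rfl⟩
      simp only [hRdef, Finset.coe_filter, Set.mem_setOf_eq] at hr
      exact hr.2
    · rw [hW, Submodule.span_le]
      rintro - ⟨r, hr, rfl⟩
      exact Submodule.subset_span ⟨r, hR₀R hr, rfl⟩
  refine ⟨R, C, ⟨?_, ?_⟩, ?_, hiC, ?_⟩
  · -- row inclusive
    intro r hr hmem
    have : rowC r ∈ W := by
      rw [← hspanR, ← hrowsM]
      exact hmem
    exact hr (by simp [hRdef, this])
  · -- rank
    have : M.rank = C.card - 1 := by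
      rw [Matrix.rank_eq_finrank_span_row, hrowsM, hspanR, hfinW]
    rw [← hM, this]
    have : 1 ≤ C.card := Finset.card_pos.2 ⟨i, hiC⟩
    omega
  · -- cardinality
    have h1 : R₀.card + l0 (A.mulVec x) = m := by
      have := Finset.card_filter_add_card_filter_not
        (s := (Finset.univ : Finset (Fin m))) (p := fun r => A.mulVec x r = 0)
      simp only [Finset.card_univ, Fintype.card_fin] at this
      rw [hR₀def, l0]
      convert this using 2
    have h2 : R₀.card ≤ R.card := Finset.card_le_card hR₀R
    omega
  · -- support
    intro j hj
    have := hCS hj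
    simpa [hSdef] using this
end

section
/- Let p₁, p₂, …, pₙ be distinct positive real numbers and let M be the n×n real matrix with entries M_{ij} = i^{p_j} (for 1 ≤ i,j ≤ n). Then every square submatrix of M is nonsingular: for every k ≥ 1 and every choice of row indices R ⊆ {1,…,n} and column indices C ⊆ {1,…,n} with |R| = |C| = k, the submatrix M(R,C) is invertible. -/
/-- A nontrivial combination `∑ j, a j * x ^ q j` with `k` distinct real exponents
cannot vanish at `k` distinct (strictly increasing) positive points. -/
private lemma exp_key : ∀ (k : ℕ) (q a : Fin k → ℝ), Function.Injective q →
    ∀ (x : Fin k → ℝ), StrictMono x → (∀ i, 0 < x i) →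
    (∀ i, ∑ j, a j * (x i) ^ (q j) = 0) → a = 0 := by
  intro k
  induction k with
  | zero => intro q a _ x _ _ _; ext j; exact j.elim0
  | succ k ih =>
    intro q a hq x hx hpos hz
    set Q : Fin (k + 1) → ℝ := fun j => q j - q 0 with hQ
    have hzero : ∀ i, ∑ j, a j * (x i) ^ (Q j) = 0 := by
      intro i
      have : ∑ j, a j * (x i) ^ (Q j) = (∑ j, a j * (x i) ^ (q j)) / (x i) ^ (q 0) := by
        rw [Finset.sum_div]
        refine Finset.sum_congr rfl fun j _ => ?_
        rw [hQ, Real.rpow_sub (hpos i)]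
        ring
      rw [this, hz i, zero_div]
    have hderiv : ∀ t : ℝ, t ≠ 0 →
        HasDerivAt (fun t => ∑ j, a j * t ^ (Q j))
          (∑ j, a j * (Q j * t ^ (Q j - 1))) t := by
      intro t ht
      apply HasDerivAt.fun_sum
      intro j _
      exact (Real.hasDerivAt_rpow_const (Or.inl ht)).const_mul (a j)
    have hroll : ∀ i : Fin k, ∃ cc ∈ Set.Ioo (x i.castSucc) (x i.succ),
        ∑ j, a j * (Q j * cc ^ (Q j - 1)) = 0 := by
      intro i
      have hab : x i.castSucc < x i.succ := hx Fin.castSucc_lt_succ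
      have hcont : ContinuousOn (fun t => ∑ j, a j * t ^ (Q j))
          (Set.Icc (x i.castSucc) (x i.succ)) := by
        intro t ht
        have htpos : (0:ℝ) < t := lt_of_lt_of_le (hpos _) ht.1
        exact ((hderiv t (ne_of_gt htpos)).continuousAt).continuousWithinAt
      have heq : (fun t => ∑ j, a j * t ^ (Q j)) (x i.castSucc)
          = (fun t => ∑ j, a j * t ^ (Q j)) (x i.succ) := by
        simp only [hzero]
      exact exists_hasDerivAt_eq_zero hab hcont heq
        (fun t ht => hderiv t (ne_of_gt (lt_trans (hpos _) ht.1)))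
    choose cc hcc hcz using hroll
    have hcpos : ∀ i, 0 < cc i := fun i => lt_trans (hpos _) (hcc i).1
    have hcmono : StrictMono cc := by
      intro i i' hii
      calc cc i < x i.succ := (hcc i).2
        _ ≤ x i'.castSucc := hx.monotone (by
              have hii' : (i : ℕ) < (i' : ℕ) := hii
              rw [Fin.le_def, Fin.val_succ, Fin.coe_castSucc]
              omega)
        _ < cc i' := (hcc i').1
    have hzero' : ∀ i : Fin k,
        ∑ j : Fin k, (a j.succ * Q j.succ) * (cc i) ^ (Q j.succ - 1) = 0 := by
      intro i
      have h1 := hcz i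
      rw [Fin.sum_univ_succ] at h1
      have h0 : Q 0 = 0 := by simp [hQ]
      rw [h0, zero_mul, mul_zero, zero_add] at h1
      calc ∑ j : Fin k, (a j.succ * Q j.succ) * (cc i) ^ (Q j.succ - 1)
          = ∑ j : Fin k, a j.succ * (Q j.succ * (cc i) ^ (Q j.succ - 1)) := by
            refine Finset.sum_congr rfl fun j _ => by ring
        _ = 0 := h1
    have hq' : Function.Injective (fun j : Fin k => Q j.succ - 1) := by
      intro j j' hjj
      simp only [hQ, sub_left_inj] at hjj
      exact Fin.succ_injective k (hq hjj)
    have hb := ih (fun j => Q j.succ - 1) (fun j => a j.succ * Q j.succ) hq'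
      cc hcmono hcpos hzero'
    have hasucc : ∀ j : Fin k, a j.succ = 0 := by
      intro j
      have hQne : Q j.succ ≠ 0 := by
        simp only [hQ, sub_ne_zero]
        exact fun h => Fin.succ_ne_zero j (hq h)
      have := congrFun hb j
      change a j.succ * Q j.succ = 0 at this
      rcases mul_eq_zero.1 this with h | h
      · exact h
      · exact absurd h hQne
    have ha0 : a 0 = 0 := by
      have h1 := hz 0
      rw [Fin.sum_univ_succ] at h1
      simp only [hasucc, zero_mul, Finset.sum_const_zero, add_zero] at h1
      have : (x 0) ^ (q 0) ≠ 0 := ne_of_gt (Real.rpow_pos_of_pos (hpos 0) _)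
      rcases mul_eq_zero.1 h1 with h | h
      · exact h
      · exact absurd h this
    ext j
    refine Fin.cases ?_ ?_ j
    · exact ha0
    · exact hasucc

/-- Version of `exp_key` for merely injective points. -/
private lemma exp_key' (k : ℕ) (q a : Fin k → ℝ) (hq : Function.Injective q)
    (x : Fin k → ℝ) (hx : Function.Injective x) (hpos : ∀ i, 0 < x i)
    (hz : ∀ i, ∑ j, a j * (x i) ^ (q j) = 0) : a = 0 := by
  have hmono : StrictMono (x ∘ Tuple.sort x) :=
    (Tuple.monotone_sort x).strictMono_of_injective
      (hx.comp (Tuple.sort x).injective)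
  exact exp_key k q a hq (x ∘ Tuple.sort x) hmono
    (fun i => hpos _) (fun i => hz _)

/-- If `p₁, …, pₙ` are distinct positive reals and `M` is the n×n real matrix
with `M i j = i ^ (p j)` (rows indexed by `1, …, n`), then every square
submatrix of `M` is nonsingular. -/
theorem power_matrix_all_submatrices_nonsingular (n : ℕ)
    (p : Fin n → ℝ) (hpos : ∀ j, 0 < p j) (hinj : Function.Injective p)
    (M : Matrix (Fin n) (Fin n) ℝ)
    (hM : ∀ i j, M i j = ((i : ℕ) + 1 : ℝ) ^ (p j)) :
    ∀ k : ℕ, 1 ≤ k → ∀ (r : Fin k → Fin n) (c : Fin k → Fin n),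
      Function.Injective r → Function.Injective c →
      IsUnit (M.submatrix r c).det := by
  intro k _ r c hr hc
  rw [isUnit_iff_ne_zero]
  intro hdet
  obtain ⟨v, hv, hmv⟩ := Matrix.exists_mulVec_eq_zero_iff.2 hdet
  have hz : ∀ i : Fin k, ∑ j, v j * (((r i : ℕ) + 1 : ℝ)) ^ (p (c j)) = 0 := by
    intro i
    have := congrFun hmv i
    simp only [Matrix.mulVec, Matrix.submatrix_apply, dotProduct,
      Pi.zero_apply] at this
    calc ∑ j, v j * (((r i : ℕ) + 1 : ℝ)) ^ (p (c j))
        = ∑ j, M (r i) (c j) * v j := by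
          refine Finset.sum_congr rfl fun j _ => ?_
          rw [hM]; ring
      _ = 0 := this
  have hxinj : Function.Injective (fun i : Fin k => (((r i : ℕ) + 1 : ℝ))) := by
    intro i i' h
    simp only [add_left_inj, Nat.cast_inj] at h
    exact hr (Fin.val_injective h)
  have hxpos : ∀ i : Fin k, (0:ℝ) < ((r i : ℕ) + 1 : ℝ) := by
    intro i; positivity
  have := exp_key' k (fun j => p (c j)) v (hinj.comp hc)
    (fun i => ((r i : ℕ) + 1 : ℝ)) hxinj hxpos hz
  exact hv this
end

section
/- Let M be the m×n matrix over ℚ with entries M_{ij} = i^{j−1} for 1 ≤ i ≤ m, 1 ≤ j ≤ n (a Vandermonde matrix with nodes 1,2,…,m). Then every square submatrix of M is nonsingular: for every k ≥ 1 and every choice of row indices R ⊆ {1,…,m} and column indices C ⊆ {1,…,n} with |R| = |C| = k, the submatrix M(R,C) is invertible. -/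
open Finset Set

/-- A real "sparse polynomial" supported on a finset `s` of exponents that vanishes
at `card s` many distinct positive points has all coefficients zero. -/
lemma descartes_aux : ∀ (k : ℕ) (s : Finset ℕ) (a : ℕ → ℝ) (t : Finset ℝ),
    s.card ≤ k → k ≤ t.card → (∀ x ∈ t, (0:ℝ) < x) →
    (∀ x ∈ t, ∑ e ∈ s, a e * x ^ e = 0) → ∀ e ∈ s, a e = 0 := by
  intro k
  induction k with
  | zero =>
    intro s a t hs _ _ _ e he
    rw [Nat.le_zero, Finset.card_eq_zero] at hs
    simp [hs] at he
  | succ k ih =>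
    intro s a t hs ht htpos hroot e he
    by_cases hsk : s.card ≤ k
    · exact ih s a t hsk (le_trans (Nat.le_succ k) ht) htpos hroot e he
    have hscard : s.card = k + 1 := le_antisymm hs (Nat.succ_le_of_lt (Nat.lt_of_not_le hsk))
    have hsne : s.Nonempty := Finset.card_pos.mp (by omega)
    set e0 := s.min' hsne with he0
    have he0mem : e0 ∈ s := s.min'_mem hsne
    have he0le : ∀ e' ∈ s, e0 ≤ e' := fun e' h => s.min'_le e' h
    -- the quotient polynomial g and its derivative g'
    set g : ℝ → ℝ := fun x => ∑ e ∈ s, a e * x ^ (e - e0) with hg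
    set g' : ℝ → ℝ := fun x => ∑ e ∈ s, a e * ((e - e0 : ℕ) * x ^ (e - e0 - 1)) with hg'
    have hgderiv : ∀ x : ℝ, HasDerivAt g (g' x) x := by
      intro x
      exact HasDerivAt.fun_sum fun e _ => (hasDerivAt_pow (e - e0) x).const_mul (a e)
    have hgcont : Continuous g := by
      exact continuous_iff_continuousAt.2 fun x => (hgderiv x).continuousAt
    -- g vanishes on t
    have hgz : ∀ x ∈ t, g x = 0 := by
      intro x hx
      have hxpos := htpos x hx
      have h1 : x ^ e0 * g x = ∑ e ∈ s, a e * x ^ e := by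
        rw [hg, Finset.mul_sum]
        refine Finset.sum_congr rfl fun e hes => ?_
        rw [mul_comm (x ^ e0), mul_assoc, ← pow_add]
        congr 2
        have := he0le e hes
        omega
      have := hroot x hx
      rw [← h1] at this
      rcases mul_eq_zero.mp this with h | h
      · exact absurd h (pow_ne_zero _ (ne_of_gt hxpos))
      · exact h
    -- enumerate k+1 points of t in increasing order
    have hy := t.orderEmbOfCardLe (k := k + 1) ht
    set y : Fin (k + 1) ↪o ℝ := t.orderEmbOfCardLe ht with hydef
    have hymem : ∀ i, y i ∈ t := fun i => t.orderEmbOfCardLe_mem ht i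
    -- Rolle between consecutive points
    have hrolle : ∀ i : Fin k, ∃ z, z ∈ Set.Ioo (y i.castSucc) (y i.succ) ∧ g' z = 0 := by
      intro i
      have hlt : y i.castSucc < y i.succ := y.strictMono Fin.castSucc_lt_succ
      obtain ⟨c, hc1, hc2⟩ := exists_hasDerivAt_eq_zero hlt hgcont.continuousOn
        ((hgz _ (hymem _)).trans (hgz _ (hymem _)).symm) (fun x _ => hgderiv x)
      exact ⟨c, hc1, hc2⟩
    choose z hz hz0 using hrolle
    have hzmono : StrictMono z := by
      intro i j hij
      calc z i < y i.succ := (hz i).2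
        _ ≤ y j.castSucc := y.monotone (by
            simp only [Fin.le_def, Fin.val_succ, Fin.coe_castSucc]
            exact hij)
        _ < z j := (hz j).1
    have hzpos : ∀ i, (0:ℝ) < z i := fun i =>
      lt_trans (htpos _ (hymem i.castSucc)) (hz i).1
    set t' : Finset ℝ := Finset.image z Finset.univ with ht'
    have ht'card : t'.card = k := by
      rw [ht', Finset.card_image_of_injective _ hzmono.injective, Finset.card_univ,
        Fintype.card_fin]
    -- new exponent set and coefficients
    set s' : Finset ℕ := (s.erase e0).image (fun e => e - e0 - 1) with hs'
    have hinj : Set.InjOn (fun e => e - e0 - 1) (s.erase e0) := by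
      intro x hx yy hyy hxy
      have hx' : e0 < x := lt_of_le_of_ne (he0le x (Finset.mem_of_mem_erase hx))
        (Ne.symm (Finset.ne_of_mem_erase hx))
      have hy' : e0 < yy := lt_of_le_of_ne (he0le yy (Finset.mem_of_mem_erase hyy))
        (Ne.symm (Finset.ne_of_mem_erase hyy))
      simp only at hxy
      omega
    have hs'card : s'.card = k := by
      rw [hs', Finset.card_image_of_injOn hinj, Finset.card_erase_of_mem he0mem, hscard]
      omega
    set b : ℕ → ℝ := fun d => a (d + e0 + 1) * ((d : ℝ) + 1) with hb
    -- g' rewritten as sparse polynomial on s'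
    have hg'sum : ∀ x : ℝ, g' x = ∑ d ∈ s', b d * x ^ d := by
      intro x
      rw [hs', Finset.sum_image hinj]
      have : g' x = ∑ e ∈ s.erase e0, a e * ((e - e0 : ℕ) * x ^ (e - e0 - 1)) := by
        simp only [hg']
        rw [← Finset.sum_erase_add s _ he0mem]
        simp
      rw [this]
      refine Finset.sum_congr rfl fun e hes => ?_
      have he' : e0 < e := lt_of_le_of_ne (he0le e (Finset.mem_of_mem_erase hes))
        (Ne.symm (Finset.ne_of_mem_erase hes))
      rw [hb]
      have h1 : e - e0 - 1 + e0 + 1 = e := by omega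
      have h2 : ((e - e0 - 1 : ℕ) : ℝ) + 1 = ((e - e0 : ℕ) : ℝ) := by
        have h3 : e - e0 - 1 + 1 = e - e0 := by omega
        calc ((e - e0 - 1 : ℕ) : ℝ) + 1 = ((e - e0 - 1 + 1 : ℕ) : ℝ) := by push_cast; ring
          _ = ((e - e0 : ℕ) : ℝ) := by rw [h3]
      simp only [h1, h2]
      ring
    -- apply induction hypothesis
    have hbzero : ∀ d ∈ s', b d = 0 := by
      refine ih s' b t' (le_of_eq hs'card) (ge_of_eq ht'card) ?_ ?_
      · intro x hx
        rw [ht', Finset.mem_image] at hx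
        obtain ⟨i, _, rfl⟩ := hx
        exact hzpos i
      · intro x hx
        rw [ht', Finset.mem_image] at hx
        obtain ⟨i, _, rfl⟩ := hx
        rw [← hg'sum]
        exact hz0 i
    -- coefficients a e = 0 for e ≠ e0
    have hane : ∀ e' ∈ s.erase e0, a e' = 0 := by
      intro e' he'
      have hd : e' - e0 - 1 ∈ s' := by
        rw [hs', Finset.mem_image]
        exact ⟨e', he', rfl⟩
      have := hbzero _ hd
      simp only [hb] at this
      have hlt : e0 < e' := lt_of_le_of_ne (he0le e' (Finset.mem_of_mem_erase he'))
        (Ne.symm (Finset.ne_of_mem_erase he'))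
      have h1 : e' - e0 - 1 + e0 + 1 = e' := by omega
      rw [h1] at this
      rcases mul_eq_zero.mp this with h | h
      · exact h
      · exfalso
        have : ((e' - e0 - 1 : ℕ) : ℝ) + 1 > 0 := by positivity
        linarith
    -- finally a e0 = 0
    have hae0 : a e0 = 0 := by
      have hx0 : y 0 ∈ t := hymem 0
      have := hgz (y 0) hx0
      simp only [hg] at this
      rw [← Finset.sum_erase_add s _ he0mem] at this
      rw [Finset.sum_eq_zero (fun e' he' => by rw [hane e' he', zero_mul])] at this
      simpa using this
    by_cases hee0 : e = e0
    · rw [hee0]; exact hae0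
    · exact hane e (Finset.mem_erase.mpr ⟨hee0, he⟩)

/-- Every square submatrix of the m×n Vandermonde matrix over ℚ with entries
`M i j = i ^ (j - 1)` (nodes `1, 2, …, m`) is nonsingular. -/
theorem vandermonde_all_submatrices_nonsingular (m n : ℕ)
    (M : Matrix (Fin m) (Fin n) ℚ)
    (hM : ∀ i j, M i j = ((i : ℕ) + 1 : ℚ) ^ (j : ℕ)) :
    ∀ k : ℕ, 1 ≤ k → ∀ (r : Fin k → Fin m) (c : Fin k → Fin n),
      Function.Injective r → Function.Injective c →
      IsUnit (M.submatrix r c).det := by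
  intro k hk r c hr hc
  rw [isUnit_iff_ne_zero]
  intro hdet
  obtain ⟨v, hv, hmv⟩ := (Matrix.exists_mulVec_eq_zero_iff).mpr hdet
  -- set up real data
  set x : Fin k → ℝ := fun i => ((r i : ℕ) + 1 : ℝ) with hx
  have hxinj : Function.Injective x := by
    intro i j hij
    apply hr
    have : ((r i : ℕ) : ℝ) = ((r j : ℕ) : ℝ) := by
      rw [hx] at hij; simp only at hij; linarith
    exact Fin.ext (Nat.cast_injective this)
  have hxpos : ∀ i, (0:ℝ) < x i := fun i => by positivity
  set s : Finset ℕ := Finset.image (fun j => (c j : ℕ)) Finset.univ with hs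
  have hcinj : Function.Injective (fun j => (c j : ℕ)) := fun i j hij =>
    hc (Fin.ext hij)
  have hscard : s.card = k := by
    rw [hs, Finset.card_image_of_injective _ hcinj, Finset.card_univ, Fintype.card_fin]
  set t : Finset ℝ := Finset.image x Finset.univ with htdef
  have htcard : t.card = k := by
    rw [htdef, Finset.card_image_of_injective _ hxinj, Finset.card_univ, Fintype.card_fin]
  -- coefficients
  classical
  set a : ℕ → ℝ := fun d => if h : ∃ j, (c j : ℕ) = d then ((v h.choose : ℚ) : ℝ) else 0
    with ha
  have haj : ∀ j, a (c j : ℕ) = ((v j : ℚ) : ℝ) := by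
    intro j
    have h : ∃ j', (c j' : ℕ) = (c j : ℕ) := ⟨j, rfl⟩
    simp only [ha]
    rw [dif_pos h]
    congr 1
    exact congrArg v (hcinj h.choose_spec)
  -- roots
  have hroot : ∀ xx ∈ t, ∑ e ∈ s, a e * xx ^ e = 0 := by
    intro xx hxx
    rw [htdef, Finset.mem_image] at hxx
    obtain ⟨i, _, rfl⟩ := hxx
    rw [hs, Finset.sum_image (hcinj.injOn)]
    have hmvi : ∑ j, M (r i) (c j) * v j = 0 := by
      have := congrFun hmv i
      simpa [Matrix.mulVec, Matrix.submatrix, dotProduct] using this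
    have : ((∑ j, M (r i) (c j) * v j : ℚ) : ℝ) = 0 := by rw [hmvi]; norm_num
    rw [← this]
    push_cast
    refine Finset.sum_congr rfl fun j _ => ?_
    rw [haj j, hM (r i) (c j)]
    push_cast
    ring
  have := descartes_aux k s a t (le_of_eq hscard) (ge_of_eq htcard)
    (by intro xx hxx
        rw [htdef, Finset.mem_image] at hxx
        obtain ⟨i, _, rfl⟩ := hxx
        exact hxpos i) hroot
  apply hv
  funext j
  have hmem : (c j : ℕ) ∈ s := by
    rw [hs, Finset.mem_image]; exact ⟨j, Finset.mem_univ j, rfl⟩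
  have := this _ hmem
  rw [haj j] at this
  exact_mod_cast this
end
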